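/- arXiv:1506.08816 — 5 statements merged into one kernel-verified Lean document; each statement's English description precedes it below -/
import Mathlib

section
/- Let $t_1, t_2$ be complex numbers and $k_1, k_2$ real numbers with $0 < k_1 \le k_2$ and $k_2^2 |t_1 t_2| < 1$. Then $\left|\frac{(t_1-t_2)k_1}{1-\overline{t_2}t_1 k_1^2}\right| \le \left|\frac{(t_1-t_2)k_2}{1-\overline{t_2}t_1 k_2^2}\right|$. -/
theorem stmt0 (t₁ t₂ : ℂ) (k₁ k₂ : ℝ) (hk₁ : 0 < k₁) (hk : k₁ ≤ k₂)
    (hlt : k₂ ^ 2 * ‖t₁ * t₂‖ < 1) :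
    ‖(t₁ - t₂) * (k₁ : ℂ) / (1 - (starRingEnd ℂ) t₂ * t₁ * (k₁ : ℂ) ^ 2)‖ ≤
      ‖(t₁ - t₂) * (k₂ : ℂ) / (1 - (starRingEnd ℂ) t₂ * t₁ * (k₂ : ℂ) ^ 2)‖ := by
  set c : ℂ := (starRingEnd ℂ) t₂ * t₁ with hc
  have hrc : ‖c‖ = ‖t₁ * t₂‖ := by
    rw [hc, norm_mul, norm_mul, Complex.norm_conj, mul_comm]
  have hcnn : (0:ℝ) ≤ ‖c‖ := norm_nonneg c
  have h2 : ‖c‖ * k₂ ^ 2 < 1 := by rw [hrc]; linarith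
  have h12 : k₁ ^ 2 ≤ k₂ ^ 2 := by nlinarith
  have h1 : ‖c‖ * k₁ ^ 2 < 1 := by nlinarith [mul_le_mul_of_nonneg_left h12 hcnn]
  have habs : ∀ k : ℝ, ‖1 - c * (k:ℂ)^2‖ ^ 2
      = 1 - 2 * k^2 * c.re + k^4 * Complex.normSq c := by
    intro k
    rw [Complex.sq_norm]
    simp [Complex.normSq_apply, Complex.sub_re, Complex.sub_im, Complex.mul_re, Complex.mul_im,
      pow_two]
    ring
  have hpos : ∀ k : ℝ, ‖c‖ * k ^ 2 < 1 → 0 < ‖1 - c * (k:ℂ)^2‖ := by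
    intro k hk'
    rw [norm_pos_iff]
    intro h
    have h' : c * (k:ℂ)^2 = 1 := by linear_combination -h
    have := congrArg (‖·‖) h'
    rw [norm_mul, norm_pow, Complex.norm_real, Real.norm_eq_abs, norm_one] at this
    nlinarith [sq_abs k, sq_nonneg k]
  have d1 := hpos k₁ h1
  have d2 := hpos k₂ h2
  rw [norm_div, norm_div, norm_mul, norm_mul, Complex.norm_real, Complex.norm_real, Real.norm_eq_abs, Real.norm_eq_abs]
  rw [div_le_div_iff₀ d1 d2]
  have hre : |c.re| ≤ ‖c‖ := Complex.abs_re_le_norm c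
  have hnsq : Complex.normSq c = ‖c‖ ^ 2 := (Complex.sq_norm c).symm
  have key : k₁ * ‖1 - c * (k₂:ℂ)^2‖ ≤ k₂ * ‖1 - c * (k₁:ℂ)^2‖ := by
    have hsq : (k₁ * ‖1 - c * (k₂:ℂ)^2‖)^2
        ≤ (k₂ * ‖1 - c * (k₁:ℂ)^2‖)^2 := by
      rw [mul_pow, mul_pow, habs, habs, hnsq]
      have hprod : (‖c‖ * k₁ ^ 2) * (‖c‖ * k₂ ^ 2) < 1 := by
        nlinarith [mul_nonneg hcnn (sq_nonneg k₁), mul_nonneg hcnn (sq_nonneg k₂)]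
      nlinarith [mul_nonneg (sub_nonneg.2 h12) (sub_nonneg.2 hprod.le)]
    have hnn : 0 ≤ k₂ * ‖1 - c * (k₁:ℂ)^2‖ :=
      mul_nonneg (by linarith) d1.le
    nlinarith [mul_nonneg (mul_nonneg hk₁.le d2.le) hnn]
  have hA : 0 ≤ ‖t₁ - t₂‖ := norm_nonneg _
  have h1' : |k₁| = k₁ := abs_of_pos hk₁
  have h2' : |k₂| = k₂ := abs_of_pos (lt_of_lt_of_le hk₁ hk)
  rw [h1', h2']
  calc ‖t₁ - t₂‖ * k₁ * ‖1 - c * (k₂:ℂ)^2‖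
      = ‖t₁ - t₂‖ * (k₁ * ‖1 - c * (k₂:ℂ)^2‖) := by ring
    _ ≤ ‖t₁ - t₂‖ * (k₂ * ‖1 - c * (k₁:ℂ)^2‖) :=
        mul_le_mul_of_nonneg_left key hA
    _ = ‖t₁ - t₂‖ * k₂ * ‖1 - c * (k₁:ℂ)^2‖ := by ring
end

section
/- Fix complex numbers $t_1, t_2$ with $t_1 t_2 \neq 0$, and define $F(k) = \frac{|t_1-t_2|^2 k^2}{1 + |t_1 t_2|^2 k^4 - 2k^2 \mathrm{Re}(\overline{t_2} t_1)}$ for real $k$. Then $F$ is monotonically nondecreasing on the interval $(0, 1/\sqrt{|t_1 t_2|})$. -/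
theorem stmt1 (t₁ t₂ : ℂ) (h : t₁ * t₂ ≠ 0) :
    MonotoneOn
      (fun k : ℝ =>
        ‖t₁ - t₂‖ ^ 2 * k ^ 2 /
          (1 + ‖t₁ * t₂‖ ^ 2 * k ^ 4 - 2 * k ^ 2 * ((starRingEnd ℂ) t₂ * t₁).re))
      (Set.Ioo 0 (1 / Real.sqrt ‖t₁ * t₂‖)) := by
  intro a ha b hb hab
  simp only
  set B := ‖t₁ * t₂‖ with hBdef
  set C := ((starRingEnd ℂ) t₂ * t₁).re with hCdef
  set A := ‖t₁ - t₂‖ ^ 2 with hAdef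
  have hA : 0 ≤ A := sq_nonneg _
  have hB0 : 0 < B := norm_pos_iff.mpr h
  have hs0 : 0 < Real.sqrt B := Real.sqrt_pos.mpr hB0
  have hs2 : Real.sqrt B ^ 2 = B := Real.sq_sqrt hB0.le
  have hC : C ≤ B := by
    have h1 : |C| ≤ ‖(starRingEnd ℂ) t₂ * t₁‖ := Complex.abs_re_le_norm _
    have h2 : ‖(starRingEnd ℂ) t₂ * t₁‖ = B := by
      rw [norm_mul, Complex.norm_conj, hBdef, norm_mul, mul_comm]
    calc C ≤ |C| := le_abs_self _
    _ ≤ B := by rw [← h2]; exact h1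
  have ha0 : 0 < a := ha.1
  have hb0 : 0 < b := hb.1
  have haB : a ^ 2 * B < 1 := by
    have h1 : a < 1 / Real.sqrt B := ha.2
    have h2 : a * Real.sqrt B < 1 := by
      rw [lt_div_iff₀ hs0] at h1; exact h1
    nlinarith [mul_pos ha0 hs0, hs2, h2]
  have hbB : b ^ 2 * B < 1 := by
    have h1 : b < 1 / Real.sqrt B := hb.2
    have h2 : b * Real.sqrt B < 1 := by
      rw [lt_div_iff₀ hs0] at h1; exact h1
    nlinarith [mul_pos hb0 hs0, hs2, h2]
  have hDa : 0 < 1 + B ^ 2 * a ^ 4 - 2 * a ^ 2 * C := by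
    nlinarith [sq_nonneg (1 - B * a ^ 2), sq_nonneg a, mul_nonneg (sq_nonneg a) (sub_nonneg.mpr hC)]
  have hDb : 0 < 1 + B ^ 2 * b ^ 4 - 2 * b ^ 2 * C := by
    nlinarith [sq_nonneg (1 - B * b ^ 2), sq_nonneg b, mul_nonneg (sq_nonneg b) (sub_nonneg.mpr hC)]
  rw [div_le_div_iff₀ hDa hDb]
  have hxy : a ^ 2 ≤ b ^ 2 := by nlinarith
  have hprod : B ^ 2 * a ^ 2 * b ^ 2 ≤ 1 := by
    nlinarith [mul_nonneg (sq_nonneg a) hB0.le, mul_nonneg (sq_nonneg b) hB0.le]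
  have key : 0 ≤ A * (b ^ 2 - a ^ 2) * (1 - B ^ 2 * a ^ 2 * b ^ 2) :=
    mul_nonneg (mul_nonneg hA (by linarith)) (by linarith)
  nlinarith [key]
end

section
/- For any two complex numbers $s, t$ in the open unit disk $\mathbb{D}$, $\left|\frac{\mathrm{Re}(s) - \mathrm{Re}(t)}{1 - \mathrm{Re}(s)\,\mathrm{Re}(t)}\right| \le \left|\frac{s - t}{1 - \bar{s} t}\right|$. -/
theorem stmt2 (s t : ℂ) (hs : ‖s‖ < 1) (ht : ‖t‖ < 1) :
    |(s.re - t.re) / (1 - s.re * t.re)| ≤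
      ‖(s - t) / (1 - (starRingEnd ℂ) s * t)‖ := by
  have hs2 : s.re ^ 2 + s.im ^ 2 < 1 := by
    have := Complex.sq_norm s
    rw [Complex.normSq_apply] at this
    nlinarith [norm_nonneg s]
  have ht2 : t.re ^ 2 + t.im ^ 2 < 1 := by
    have := Complex.sq_norm t
    rw [Complex.normSq_apply] at this
    nlinarith [norm_nonneg t]
  have ha : |s.re| < 1 := by
    rw [abs_lt]; constructor <;> nlinarith [sq_nonneg s.im]
  have hb : |t.re| < 1 := by
    rw [abs_lt]; constructor <;> nlinarith [sq_nonneg t.im]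
  have hden : (0:ℝ) < 1 - s.re * t.re := by
    nlinarith [abs_lt.mp ha, abs_lt.mp hb, sq_nonneg (s.re - t.re), sq_nonneg (s.re + t.re)]
  have hdenC : ‖1 - (starRingEnd ℂ) s * t‖ > 0 := by
    have : ‖(starRingEnd ℂ) s * t‖ < 1 := by
      rw [norm_mul, Complex.norm_conj]
      nlinarith [norm_nonneg s, norm_nonneg t]
    have h1 : (1 : ℂ) - (starRingEnd ℂ) s * t ≠ 0 := by
      intro h
      have he : (starRingEnd ℂ) s * t = 1 := by linear_combination -h
      rw [he] at this; simp at this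
    exact norm_pos_iff.mpr h1
  rw [norm_div, abs_div, abs_of_pos hden]
  rw [div_le_div_iff₀ hden hdenC]
  have hsq : (|s.re - t.re| * ‖1 - (starRingEnd ℂ) s * t‖) ^ 2 ≤
      (‖s - t‖ * (1 - s.re * t.re)) ^ 2 := by
    rw [mul_pow, mul_pow, sq_abs, Complex.sq_norm, Complex.sq_norm, Complex.normSq_apply,
      Complex.normSq_apply]
    simp only [Complex.sub_re, Complex.sub_im, Complex.one_re, Complex.one_im, Complex.mul_re,
      Complex.mul_im, Complex.conj_re, Complex.conj_im]
    ring_nf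
    nlinarith [mul_nonneg (sq_nonneg (s.re - t.re))
        (add_nonneg (mul_nonneg (sq_nonneg s.im) (le_of_lt (by nlinarith [sq_nonneg t.re] : (0:ℝ) < 1 - t.re^2 - t.im^2)))
          (mul_nonneg (sq_nonneg t.im) (le_of_lt (by nlinarith [sq_nonneg s.im] : (0:ℝ) < 1 - s.re^2)))),
      mul_nonneg (sq_nonneg (s.im - t.im))
        (mul_nonneg (le_of_lt (by nlinarith [sq_nonneg s.im] : (0:ℝ) < 1 - s.re^2))
          (le_of_lt (by nlinarith [sq_nonneg t.im] : (0:ℝ) < 1 - t.re^2)))]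
  have h1 : 0 ≤ |s.re - t.re| * ‖1 - (starRingEnd ℂ) s * t‖ :=
    mul_nonneg (abs_nonneg _) (norm_nonneg _)
  have h2 : 0 ≤ ‖s - t‖ * (1 - s.re * t.re) :=
    mul_nonneg (norm_nonneg _) hden.le
  nlinarith [hsq, h1, h2]
end

section
/- Let $k \in (0,1]$ and $s, t \in \mathbb{D}$ (the open unit disk in $\mathbb{C}$). Then $\left|\frac{(\mathrm{Re}(s) - \mathrm{Re}(t))\,k}{1 - \mathrm{Re}(s)\,\mathrm{Re}(t)\,k^2}\right| \le \left|\frac{t - s}{1 - s\bar{t}}\right|$. -/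
set_option maxHeartbeats 1000000 in
theorem stmt3 (k : ℝ) (hk : k ∈ Set.Ioc (0 : ℝ) 1) (s t : ℂ)
    (hs : ‖s‖ < 1) (ht : ‖t‖ < 1) :
    |(s.re - t.re) * k / (1 - s.re * t.re * k ^ 2)| ≤
      ‖(t - s) / (1 - s * (starRingEnd ℂ) t)‖ := by
  obtain ⟨hk0, hk1⟩ := hk
  set a := s.re with ha'
  set b := t.re with hb'
  set c := s.im with hc'
  set d := t.im with hd'
  have hac : a ^ 2 + c ^ 2 < 1 := by
    have h1 : Complex.normSq s < 1 := by
      rw [← Complex.sq_norm]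
      nlinarith [norm_nonneg s]
    rw [Complex.normSq_apply] at h1
    nlinarith
  have hbd : b ^ 2 + d ^ 2 < 1 := by
    have h1 : Complex.normSq t < 1 := by
      rw [← Complex.sq_norm]
      nlinarith [norm_nonneg t]
    rw [Complex.normSq_apply] at h1
    nlinarith
  have ha2 : a ^ 2 < 1 := by nlinarith [sq_nonneg c]
  have hb2 : b ^ 2 < 1 := by nlinarith [sq_nonneg d]
  have hk2 : k ^ 2 ≤ 1 := by nlinarith
  -- denominators positive
  have habk : a * b * k ^ 2 < 1 := by
    nlinarith [sq_nonneg (a * k - b * k), sq_nonneg (a * k + b * k),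
      mul_nonneg (sq_nonneg a) (by nlinarith : (0:ℝ) ≤ 1 - k ^ 2),
      mul_nonneg (sq_nonneg b) (by nlinarith : (0:ℝ) ≤ 1 - k ^ 2)]
  have hden1 : 0 < 1 - a * b * k ^ 2 := by linarith
  have hden0 : 0 < 1 - a * b := by nlinarith [sq_nonneg (a - b), sq_nonneg (a + b)]
  -- the complex denominator is nonzero
  have hwabs : ‖s * (starRingEnd ℂ) t‖ < 1 := by
    rw [norm_mul, Complex.norm_conj]
    nlinarith [norm_nonneg s, norm_nonneg t]
  have hw : (1 : ℂ) - s * (starRingEnd ℂ) t ≠ 0 := by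
    intro h
    have : s * (starRingEnd ℂ) t = 1 := by linear_combination -h
    rw [this] at hwabs
    simp at hwabs
  have hDpos : 0 < Complex.normSq (1 - s * (starRingEnd ℂ) t) :=
    Complex.normSq_pos.mpr hw
  have hD : Complex.normSq (1 - s * (starRingEnd ℂ) t)
      = (1 - a * b - c * d) ^ 2 + (a * d - c * b) ^ 2 := by
    simp [Complex.normSq_apply, Complex.sub_re, Complex.sub_im, Complex.mul_re,
      Complex.mul_im, Complex.conj_re, Complex.conj_im, Complex.one_re, Complex.one_im,
      ← ha', ← hb', ← hc', ← hd']
    ring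
  have hN : Complex.normSq (t - s) = (b - a) ^ 2 + (d - c) ^ 2 := by
    simp [Complex.normSq_apply, Complex.sub_re, Complex.sub_im, ← ha', ← hb', ← hc', ← hd']
    ring
  -- square comparison
  have h2 : ((a - b) * k / (1 - a * b * k ^ 2)) ^ 2
      ≤ ‖(t - s) / (1 - s * (starRingEnd ℂ) t)‖ ^ 2 := by
    rw [Complex.sq_norm, Complex.normSq_div, div_pow,
      div_le_div_iff₀ (by positivity) hDpos, hD, hN]
    -- Step A : (k * (1 - a*b))^2 ≤ (1 - a*b*k^2)^2
    have hA : (k * (1 - a * b)) ^ 2 ≤ (1 - a * b * k ^ 2) ^ 2 := by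
      have h0 : 0 ≤ k * (1 - a * b) := by positivity
      have hab1 : (0:ℝ) ≤ 1 + a * b * k := by
        nlinarith [sq_nonneg (a + b * k), mul_nonneg (sq_nonneg b) (by nlinarith : (0:ℝ) ≤ 1 - k ^ 2)]
      have h1 : k * (1 - a * b) ≤ 1 - a * b * k ^ 2 := by
        nlinarith [mul_nonneg (by linarith : (0:ℝ) ≤ 1 - k) hab1]
      exact pow_le_pow_left₀ h0 h1 2
    -- Step B : (a-b)^2 * Dq ≤ N * (1-a*b)^2
    have hB : (a - b) ^ 2 * ((1 - a * b - c * d) ^ 2 + (a * d - c * b) ^ 2)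
        ≤ ((b - a) ^ 2 + (d - c) ^ 2) * (1 - a * b) ^ 2 := by
      have key : ((b - a) ^ 2 + (d - c) ^ 2) * (1 - a * b) ^ 2
          - (a - b) ^ 2 * ((1 - a * b - c * d) ^ 2 + (a * d - c * b) ^ 2)
          = (c - d) ^ 2 * ((1 - a ^ 2) * (1 - b ^ 2))
            + (a - b) ^ 2 * ((1 - a ^ 2) * d ^ 2)
            + (a - b) ^ 2 * (c ^ 2 * (1 - b ^ 2 - d ^ 2)) := by ring
      have t1 : (0:ℝ) ≤ (c - d) ^ 2 * ((1 - a ^ 2) * (1 - b ^ 2)) :=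
        mul_nonneg (sq_nonneg _) (mul_nonneg (by linarith) (by linarith))
      have t2 : (0:ℝ) ≤ (a - b) ^ 2 * ((1 - a ^ 2) * d ^ 2) :=
        mul_nonneg (sq_nonneg _) (mul_nonneg (by linarith) (sq_nonneg _))
      have t3 : (0:ℝ) ≤ (a - b) ^ 2 * (c ^ 2 * (1 - b ^ 2 - d ^ 2)) :=
        mul_nonneg (sq_nonneg _) (mul_nonneg (sq_nonneg _) (by linarith))
      linarith
    calc ((a - b) * k) ^ 2 * ((1 - a * b - c * d) ^ 2 + (a * d - c * b) ^ 2)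
        = ((a - b) ^ 2 * ((1 - a * b - c * d) ^ 2 + (a * d - c * b) ^ 2)) * k ^ 2 := by ring
      _ ≤ (((b - a) ^ 2 + (d - c) ^ 2) * (1 - a * b) ^ 2) * k ^ 2 :=
          mul_le_mul_of_nonneg_right hB (sq_nonneg k)
      _ = ((b - a) ^ 2 + (d - c) ^ 2) * (k * (1 - a * b)) ^ 2 := by ring
      _ ≤ ((b - a) ^ 2 + (d - c) ^ 2) * (1 - a * b * k ^ 2) ^ 2 :=
          mul_le_mul_of_nonneg_left hA (by positivity)
  calc |(a - b) * k / (1 - a * b * k ^ 2)|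
      = Real.sqrt (((a - b) * k / (1 - a * b * k ^ 2)) ^ 2) := by
        rw [Real.sqrt_sq_eq_abs]
    _ ≤ Real.sqrt (‖(t - s) / (1 - s * (starRingEnd ℂ) t)‖ ^ 2) :=
        Real.sqrt_le_sqrt h2
    _ = ‖(t - s) / (1 - s * (starRingEnd ℂ) t)‖ :=
        Real.sqrt_sq (norm_nonneg _)
end

section
/- The map $z \mapsto \mathrm{Re}(z)$ from the open unit disk $\mathbb{D}$ to the interval $(-1,1)$ is 1-Lipschitz with respect to the hyperbolic (Poincaré) metric, i.e., for all $s, t \in \mathbb{D}$, $d_H(\mathrm{Re}(s), \mathrm{Re}(t)) \le d_H(s, t)$, where $d_H(z_1,z_2) = \frac{1}{2}\log\frac{1+\left|\frac{z_1-z_2}{1-\bar{z}_1 z_2}\right|}{1-\left|\frac{z_1-z_2}{1-\bar{z}_1 z_2}\right|}$. -/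
noncomputable def dH (z₁ z₂ : ℂ) : ℝ :=
  (1 / 2) * Real.log
    ((1 + ‖(z₁ - z₂) / (1 - (starRingEnd ℂ) z₁ * z₂)‖) /
     (1 - ‖(z₁ - z₂) / (1 - (starRingEnd ℂ) z₁ * z₂)‖))

set_option maxHeartbeats 1000000 in
theorem stmt4 (s t : ℂ) (hs : ‖s‖ < 1) (ht : ‖t‖ < 1) :
    dH (s.re : ℂ) (t.re : ℂ) ≤ dH s t := by
  set a := s.re with ha
  set b := s.im with hb
  set c := t.re with hc
  set d := t.im with hd
  have hs2 : a ^ 2 + b ^ 2 < 1 := by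
    have h1 : Complex.normSq s < 1 := by
      rw [← Complex.sq_norm]; nlinarith [norm_nonneg s]
    have := Complex.normSq_apply s
    nlinarith
  have ht2 : c ^ 2 + d ^ 2 < 1 := by
    have h1 : Complex.normSq t < 1 := by
      rw [← Complex.sq_norm]; nlinarith [norm_nonneg t]
    have := Complex.normSq_apply t
    nlinarith
  have ha1 : a ^ 2 < 1 := by nlinarith [sq_nonneg b]
  have hc1 : c ^ 2 < 1 := by nlinarith [sq_nonneg d]
  have hac : 0 < 1 - a * c := by nlinarith [sq_nonneg (a - c), sq_nonneg (a + c)]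
  -- X : pseudo-hyperbolic distance of the real parts
  set X := ‖((a : ℂ) - (c : ℂ)) / (1 - (starRingEnd ℂ) (a : ℂ) * (c : ℂ))‖ with hX
  set Y := ‖(s - t) / (1 - (starRingEnd ℂ) s * t)‖ with hY
  have hXval : X = |a - c| / (1 - a * c) := by
    rw [hX, norm_div]
    have e1 : ((a : ℂ) - (c : ℂ)) = ((a - c : ℝ) : ℂ) := by push_cast; ring
    have e2 : (1 - (starRingEnd ℂ) (a : ℂ) * (c : ℂ)) = ((1 - a * c : ℝ) : ℂ) := by
      rw [Complex.conj_ofReal]; push_cast; ring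
    rw [e1, e2]; simp only [Complex.norm_real, Real.norm_eq_abs]; rw [abs_of_pos hac]
  have hXnn : 0 ≤ X := norm_nonneg _
  have hYnn : 0 ≤ Y := norm_nonneg _
  -- normSq computations
  have hnum : Complex.normSq (s - t) = (a - c) ^ 2 + (b - d) ^ 2 := by
    simp [Complex.normSq_apply, Complex.sub_re, Complex.sub_im]; ring
  have hden : Complex.normSq (1 - (starRingEnd ℂ) s * t)
      = (1 - a * c - b * d) ^ 2 + (a * d - b * c) ^ 2 := by
    simp [Complex.normSq_apply, Complex.sub_re, Complex.sub_im, Complex.mul_re,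
      Complex.mul_im]; ring
  have hddpos : 0 < (1 - a * c - b * d) ^ 2 + (a * d - b * c) ^ 2 := by
    have key0 : (1 - a * c - b * d) ^ 2 + (a * d - b * c) ^ 2
        - ((a - c) ^ 2 + (b - d) ^ 2) = (1 - a ^ 2 - b ^ 2) * (1 - c ^ 2 - d ^ 2) := by
      ring
    have t0 : (0:ℝ) < (1 - a ^ 2 - b ^ 2) * (1 - c ^ 2 - d ^ 2) :=
      mul_pos (by linarith) (by linarith)
    nlinarith [sq_nonneg (a - c), sq_nonneg (b - d)]
  have hY2 : Y ^ 2 = ((a - c) ^ 2 + (b - d) ^ 2) /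
      ((1 - a * c - b * d) ^ 2 + (a * d - b * c) ^ 2) := by
    rw [hY, norm_div, div_pow, Complex.sq_norm, Complex.sq_norm, hnum, hden]
  -- Y < 1
  have hYlt : Y < 1 := by
    have h : Y ^ 2 < 1 := by
      rw [hY2, div_lt_one hddpos]
      have key2 : (1 - a * c - b * d) ^ 2 + (a * d - b * c) ^ 2
          - ((a - c) ^ 2 + (b - d) ^ 2) = (1 - a ^ 2 - b ^ 2) * (1 - c ^ 2 - d ^ 2) := by
        ring
      have t0 : (0:ℝ) < (1 - a ^ 2 - b ^ 2) * (1 - c ^ 2 - d ^ 2) :=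
        mul_pos (by linarith) (by linarith)
      linarith
    linarith [sq_nonneg (Y - 1)]
  -- X ≤ Y
  have hXY : X ≤ Y := by
    have hsq : X ^ 2 ≤ Y ^ 2 := by
      have hX2 : X ^ 2 = (a - c) ^ 2 / (1 - a * c) ^ 2 := by
        rw [hXval, div_pow, sq_abs]
      rw [hX2, hY2, div_le_div_iff₀ (by positivity) hddpos]
      have key : ((a - c) ^ 2 + (b - d) ^ 2) * (1 - a * c) ^ 2
          - (a - c) ^ 2 * ((1 - a * c - b * d) ^ 2 + (a * d - b * c) ^ 2)
          = (1 - a ^ 2) * (1 - c ^ 2) * (b - d) ^ 2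
            + (a - c) ^ 2 * (d ^ 2 * (1 - a ^ 2 - b ^ 2) + b ^ 2 * (1 - c ^ 2)) := by
        ring
      have t1 : (0:ℝ) ≤ (1 - a ^ 2) * (1 - c ^ 2) * (b - d) ^ 2 :=
        mul_nonneg (mul_nonneg (by linarith) (by linarith)) (sq_nonneg _)
      have t2 : (0:ℝ) ≤ (a - c) ^ 2 * (d ^ 2 * (1 - a ^ 2 - b ^ 2) + b ^ 2 * (1 - c ^ 2)) :=
        mul_nonneg (sq_nonneg _)
          (add_nonneg (mul_nonneg (sq_nonneg d) (by linarith))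
            (mul_nonneg (sq_nonneg b) (by linarith)))
      linarith
    nlinarith [hsq, hXnn, hYnn, sq_nonneg (X - Y), sq_nonneg (X + Y)]
  have hXlt : X < 1 := lt_of_le_of_lt hXY hYlt
  -- conclude via monotonicity of log((1+x)/(1-x))
  show (1 / 2) * Real.log ((1 + X) / (1 - X)) ≤ (1 / 2) * Real.log ((1 + Y) / (1 - Y))
  have h0 : (0:ℝ) < (1 + X) / (1 - X) := div_pos (by linarith) (by linarith)
  have hle : (1 + X) / (1 - X) ≤ (1 + Y) / (1 - Y) := by
    rw [div_le_div_iff₀ (by linarith) (by linarith)]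
    ring_nf
    linarith
  have := Real.log_le_log h0 hle
  linarith
end
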